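/- Let K be a compact Hausdorff space and Z ⊆ K a closed subset. Then the closed ideal I_Z(K) = {f ∈ C(K) : f|_Z = 0} has property U in C(K): every continuous linear functional on I_Z(K) has a unique norm-preserving extension to C(K). -/

import Mathlib

set_option maxHeartbeats 1000000

open Set

/-- (Phelps) Let `K` be a compact Hausdorff space and `Z ⊆ K` closed. The closed ideal
`I_Z(K) = {f ∈ C(K) : f|_Z = 0}` has property U in `C(K)`: every continuous linear
functional on it has a unique norm-preserving extension to `C(K)`. -/
theorem ideal_propertyU (K : Type*) [TopologicalSpace K] [CompactSpace K] [T2Space K]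
    (Z : Set K) (hZ : IsClosed Z)
    (I : Subspace ℝ C(K, ℝ)) (hI : ∀ f : C(K, ℝ), f ∈ I ↔ ∀ z ∈ Z, f z = 0)
    (φ : I →L[ℝ] ℝ) :
    ∃! g : C(K, ℝ) →L[ℝ] ℝ, (∀ f : I, g f = φ f) ∧ ‖g‖ = @norm _ ContinuousLinearMap.hasOpNorm φ := by
  obtain ⟨φ, hψ⟩ : ∃ ψ : StrongDual ℝ I, ψ = φ := ⟨φ, rfl⟩
  subst hψ
  letI : NormedAddCommGroup I := Submodule.normedAddCommGroup (E := C(K, ℝ)) I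
  letI : NormedSpace ℝ I := Submodule.normedSpace (E := C(K, ℝ)) I
  obtain ⟨g, hg, hgn⟩ := exists_extension_norm_eq I φ
  refine ⟨g, ⟨hg, hgn⟩, ?_⟩
  rintro g' ⟨hg', hg'n⟩
  -- It suffices to show `g' u = g u` for `‖u‖ ≤ 1`.
  suffices key : ∀ u : C(K, ℝ), ‖u‖ ≤ 1 → g' u = g u by
    ext u
    have hc : (0:ℝ) < ‖u‖ + 1 := by positivity
    have h1 : ‖(‖u‖ + 1)⁻¹ • u‖ ≤ 1 := by
      have h2 := norm_smul_le ((‖u‖ + 1)⁻¹) u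
      rw [norm_inv, Real.norm_eq_abs, abs_of_pos hc] at h2
      calc ‖(‖u‖ + 1)⁻¹ • u‖ ≤ (‖u‖ + 1)⁻¹ * ‖u‖ := h2
        _ ≤ 1 := by rw [inv_mul_le_iff₀ hc]; linarith
    have := key _ h1
    rw [map_smul, map_smul, smul_eq_mul, smul_eq_mul] at this
    exact mul_left_cancel₀ (inv_ne_zero hc.ne') this
  intro u hu
  -- `|g' u - g u| ≤ ε` for every `ε > 0`.
  have main : ∀ ε : ℝ, 0 < ε → |g' u - g u| ≤ ε := by
    intro ε hε
    set ε' : ℝ := ε / 4 with hε'def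
    have hε' : 0 < ε' := by positivity
    -- a near-norming element of `I`
    obtain ⟨F, hF1, hFφ⟩ : ∃ F : I, ‖F‖ ≤ 1 ∧ ‖φ‖ - ε' ≤ φ F := by
      rcases le_or_gt ‖φ‖ ε' with h | h
      · exact ⟨0, by simp, by simp; linarith⟩
      · obtain ⟨x, hx1, hx2⟩ := φ.exists_lt_apply_of_lt_opNorm (show ‖φ‖ - ε' < ‖φ‖ by linarith)
        rcases le_or_gt 0 (φ x) with hsg | hsg
        · exact ⟨x, hx1.le, by rw [Real.norm_eq_abs, abs_of_nonneg hsg] at hx2; linarith⟩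
        · refine ⟨-x, by simpa using hx1.le, ?_⟩
          rw [Real.norm_eq_abs, abs_of_neg hsg] at hx2
          rw [map_neg]; linarith
    set δ : ℝ := min 1 (ε' / (‖φ‖ + 1)) with hδdef
    have hδpos : 0 < δ := lt_min one_pos (by positivity)
    have hδ1 : δ ≤ 1 := min_le_left _ _
    have hδφ : ‖φ‖ * δ ≤ ε' := by
      have h2 : δ ≤ ε' / (‖φ‖ + 1) := min_le_right _ _
      have hφ0 : (0:ℝ) ≤ ‖φ‖ := φ.opNorm_nonneg
      calc ‖φ‖ * δ ≤ (‖φ‖ + 1) * (ε' / (‖φ‖ + 1)) := by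
            apply mul_le_mul (by linarith) h2 hδpos.le (by positivity)
        _ = ε' := by field_simp
    set f0 : C(K, ℝ) := (F : C(K, ℝ)) with hf0
    have hf0n : ‖f0‖ ≤ 1 := hF1
    -- Urysohn function
    have hsopen : IsOpen {x | |f0 x| < δ} := by
      have : Continuous fun x => |f0 x| := f0.continuous.abs
      exact isOpen_lt this continuous_const
    have hdisj : Disjoint {x | |f0 x| < δ}ᶜ Z := by
      rw [Set.disjoint_compl_left_iff_subset]
      intro z hz
      have : f0 z = 0 := (hI f0).mp F.2 z hz
      simp [this, hδpos]
    obtain ⟨χ, hχ0, hχ1, hχmem⟩ :=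
      exists_continuous_zero_one_of_isClosed hsopen.isClosed_compl hZ hdisj
    -- membership facts
    have hmem1 : f0 * (1 - χ) ∈ I := by
      rw [hI]; intro z hz
      have : f0 z = 0 := (hI f0).mp F.2 z hz
      simp [this]
    have hmem2 : ∀ v : C(K, ℝ), v - v * χ ∈ I := by
      intro v
      rw [hI]; intro z hz
      have : χ z = 1 := hχ1 hz
      simp [this]
    -- `f0 * χ` is small
    have hsmall : ‖f0 * χ‖ ≤ δ := by
      rw [ContinuousMap.norm_le _ hδpos.le]
      intro x
      rcases lt_or_ge (|f0 x| ) δ with h | h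
      · have h0 : 0 ≤ χ x := (hχmem x).1
        have h1 : χ x ≤ 1 := (hχmem x).2
        have : |f0 x * χ x| = |f0 x| * χ x := by
          rw [abs_mul, abs_of_nonneg h0]
        simp only [ContinuousMap.mul_apply, Real.norm_eq_abs, this]
        nlinarith [abs_nonneg (f0 x)]
      · have : χ x = 0 := hχ0 (by simpa using h)
        simp [this, hδpos.le]
    -- the key bound
    have hb : ∀ gg : C(K, ℝ) →L[ℝ] ℝ, (∀ f : I, gg f = φ f) → ‖gg‖ = ‖φ‖ →
        ∀ v : C(K, ℝ), ‖v‖ ≤ 1 → gg (v * χ) ≤ 2 * ε' := by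
      intro gg hgge hggn v hv
      set w : C(K, ℝ) := f0 * (1 - χ) + v * χ with hw
      have hwn : ‖w‖ ≤ 1 := by
        rw [ContinuousMap.norm_le _ zero_le_one]
        intro x
        have h0 : 0 ≤ χ x := (hχmem x).1
        have h1 : χ x ≤ 1 := (hχmem x).2
        have hvx : |v x| ≤ 1 := le_trans (v.norm_coe_le_norm x) hv
        rcases lt_or_ge (|f0 x|) δ with h | h
        · simp only [hw, ContinuousMap.add_apply, ContinuousMap.mul_apply,
            ContinuousMap.sub_apply, ContinuousMap.one_apply, Real.norm_eq_abs]
          have habs : |f0 x * (1 - χ x) + v x * χ x| ≤ |f0 x| * (1 - χ x) + |v x| * χ x := by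
            calc |f0 x * (1 - χ x) + v x * χ x| ≤ |f0 x * (1 - χ x)| + |v x * χ x| :=
                  abs_add_le _ _
              _ = |f0 x| * (1 - χ x) + |v x| * χ x := by
                  rw [abs_mul, abs_mul, abs_of_nonneg (by linarith : (0:ℝ) ≤ 1 - χ x),
                    abs_of_nonneg h0]
          nlinarith [abs_nonneg (f0 x)]
        · have hχx : χ x = 0 := hχ0 (by simpa using h)
          simp only [hw, ContinuousMap.add_apply, ContinuousMap.mul_apply,
            ContinuousMap.sub_apply, ContinuousMap.one_apply, hχx, Real.norm_eq_abs]
          simp only [sub_zero, mul_one, mul_zero, add_zero]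
          exact le_trans (f0.norm_coe_le_norm x) hf0n
      have hgw : gg w ≤ ‖φ‖ := by
        calc gg w ≤ |gg w| := le_abs_self _
          _ ≤ ‖gg‖ * ‖w‖ := gg.le_opNorm w
          _ ≤ ‖φ‖ * 1 := by
              rw [hggn]; exact mul_le_mul_of_nonneg_left hwn φ.opNorm_nonneg
          _ = ‖φ‖ := mul_one _
      -- decompose gg w
      have hdec : gg w = φ ⟨f0 * (1 - χ), hmem1⟩ + gg (v * χ) := by
        have e := hgge (⟨f0 * (1 - χ), hmem1⟩ : I)
        rw [show ((⟨f0 * (1 - χ), hmem1⟩ : I) : C(K, ℝ)) = f0 * (1 - χ) from rfl] at e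
        rw [hw, map_add, e]
      -- lower bound for φ on the first part
      have hFsub : (F : C(K, ℝ)) - f0 * (1 - χ) = f0 * χ := by
        rw [← hf0]; ring
      have hφlow : ‖φ‖ - 2 * ε' ≤ φ ⟨f0 * (1 - χ), hmem1⟩ := by
        have heq : φ F - φ ⟨f0 * (1 - χ), hmem1⟩ = φ (F - ⟨f0 * (1 - χ), hmem1⟩) := by
          rw [map_sub]
        have hnorm : ‖F - (⟨f0 * (1 - χ), hmem1⟩ : I)‖ ≤ δ := by
          have : ((F - (⟨f0 * (1 - χ), hmem1⟩ : I) : I) : C(K, ℝ)) = f0 * χ := hFsub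
          rw [show ‖F - (⟨f0 * (1 - χ), hmem1⟩ : I)‖
              = ‖((F - (⟨f0 * (1 - χ), hmem1⟩ : I) : I) : C(K, ℝ))‖ from rfl, this]
          exact hsmall
        have habs : |φ (F - ⟨f0 * (1 - χ), hmem1⟩)| ≤ ‖φ‖ * δ := by
          calc |φ (F - ⟨f0 * (1 - χ), hmem1⟩)| ≤ ‖φ‖ * ‖F - (⟨f0 * (1 - χ), hmem1⟩ : I)‖ :=
                φ.le_opNorm _
            _ ≤ ‖φ‖ * δ := mul_le_mul_of_nonneg_left hnorm φ.opNorm_nonneg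
        have := abs_le.mp habs
        have h5 : φ F - φ ⟨f0 * (1 - χ), hmem1⟩ ≤ ‖φ‖ * δ := by
          rw [heq]; exact this.2
        linarith
      linarith [hdec ▸ hgw, hφlow]
    -- apply hb to g, g' with v = u and v = -u
    have h1 := hb g' hg' hg'n u hu
    have h2 := hb g hg hgn u hu
    have hun : ‖-u‖ ≤ 1 := by simpa using hu
    have h3 := hb g' hg' hg'n (-u) hun
    have h4 := hb g hg hgn (-u) hun
    have hneg : ∀ gg : C(K, ℝ) →L[ℝ] ℝ, gg ((-u) * χ) = - gg (u * χ) := by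
      intro gg
      rw [show (-u) * χ = -(u * χ) by ring, map_neg]
    rw [hneg] at h3 h4
    -- g' u - g u = g'(uχ) - g(uχ)
    have hsame : g' (u - u * χ) = g (u - u * χ) := by
      have e := hg' (⟨u - u * χ, hmem2 u⟩ : I)
      have e2 := hg (⟨u - u * χ, hmem2 u⟩ : I)
      rw [show ((⟨u - u * χ, hmem2 u⟩ : I) : C(K, ℝ)) = u - u * χ from rfl] at e e2
      rw [e, e2]
    have hdiff : g' u - g u = g' (u * χ) - g (u * χ) := by
      have e1 : g' u = g' (u - u * χ) + g' (u * χ) := by rw [map_sub]; ring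
      have e2 : g u = g (u - u * χ) + g (u * χ) := by rw [map_sub]; ring
      rw [e1, e2, hsame]; ring
    rw [hdiff, abs_sub_le_iff]
    constructor <;> [skip; skip] <;> linarith [hε'def ▸ hε']
  have : |g' u - g u| ≤ 0 := le_of_forall_pos_le_add (by intro ε hε; linarith [main ε hε])
  have := abs_nonpos_iff.mp this
  linarith [sub_eq_zero.mp this]
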